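/- The map Φ_n is a surjection from ℂ^n onto the set of monic polynomials p ∈ ℂ[z] of degree 2n satisfying the functional equation p(z) = p(1 − z) (i.e. p composed with z ↦ 1 − z equals p), and two tuples a, b ∈ ℂ^n satisfy Φ_n(a) = Φ_n(b) if and only if a and b lie in the same orbit of the hyperoctahedral group W(B_n). -/

import Mathlib

open Polynomial

/-- `Φ_n(a₁, …, a_n) = ∏_{i=1}^n (z − 1/2 + a_i)(z − 1/2 − a_i)`. -/
noncomputable def PhiMap (n : ℕ) (a : Fin n → ℂ) : Polynomial ℂ :=
  ∏ i : Fin n, ((X - C (1/2) + C (a i)) * (X - C (1/2) - C (a i)))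

/-- Two tuples lie in the same orbit of the hyperoctahedral group `W(B_n)` (signed
permutations acting on `ℂⁿ` by permuting the coordinates and changing their signs). -/
def SameBnOrbit (n : ℕ) (a b : Fin n → ℂ) : Prop :=
  ∃ σ : Equiv.Perm (Fin n), ∃ ε : Fin n → ℂ,
    (∀ i, ε i = 1 ∨ ε i = -1) ∧ ∀ i, b i = ε i * a (σ i)

private lemma exists_perm_of_ofFn_perm {α : Type*} [LinearOrder α] {n : ℕ} {f g : Fin n → α}
    (h : (List.ofFn f).Perm (List.ofFn g)) : ∃ σ : Equiv.Perm (Fin n), ∀ i, f i = g (σ i) := by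
  classical
  have h1 : List.ofFn (f ∘ Tuple.sort f) = List.ofFn (g ∘ Tuple.sort g) :=
    List.Perm.eq_of_sortedLE
      (Tuple.monotone_sort f).sortedLE_ofFn (Tuple.monotone_sort g).sortedLE_ofFn
      ((((Tuple.sort f).ofFn_comp_perm f).trans h).trans
        ((Tuple.sort g).ofFn_comp_perm g).symm)
  have h2 : f ∘ Tuple.sort f = g ∘ Tuple.sort g := List.ofFn_injective h1
  refine ⟨(Tuple.sort f).symm.trans (Tuple.sort g), fun i => ?_⟩
  have := congrFun h2 ((Tuple.sort f).symm i)
  simpa using this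

private lemma phi_eq (n : ℕ) (a : Fin n → ℂ) :
    PhiMap n a = (∏ i : Fin n, (X - C ((a i)^2))).comp ((X - C (1/2:ℂ))^2) := by
  rw [Polynomial.prod_comp, PhiMap]
  refine Finset.prod_congr rfl fun i _ => ?_
  simp only [sub_comp, X_comp, C_comp, pow_comp, map_pow]
  ring

private lemma factor_monic (c d : ℂ) : ((X - C c + C d) * (X - C c - C d)).Monic := by
  have h1 : X - C c + C d = X + C (d - c) := by rw [map_sub]; ring
  have h2 : X - C c - C d = X + C (-d - c) := by rw [map_sub, map_neg]; ring
  rw [h1, h2]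
  exact (monic_X_add_C _).mul (monic_X_add_C _)

private lemma factor_natDegree (c d : ℂ) :
    ((X - C c + C d) * (X - C c - C d)).natDegree = 2 := by
  have h1 : X - C c + C d = X + C (d - c) := by rw [map_sub]; ring
  have h2 : X - C c - C d = X + C (-d - c) := by rw [map_sub, map_neg]; ring
  rw [h1, h2, natDegree_mul (monic_X_add_C _).ne_zero (monic_X_add_C _).ne_zero,
    natDegree_X_add_C, natDegree_X_add_C]

private lemma phi_monic (n : ℕ) (a : Fin n → ℂ) : (PhiMap n a).Monic :=
  monic_prod_of_monic _ _ fun i _ => factor_monic _ _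

private lemma phi_natDegree (n : ℕ) (a : Fin n → ℂ) : (PhiMap n a).natDegree = 2 * n := by
  rw [PhiMap, natDegree_prod _ _ fun i _ => (factor_monic _ _).ne_zero]
  simp [factor_natDegree, mul_comm]

private lemma phi_funcEq (n : ℕ) (a : Fin n → ℂ) :
    (PhiMap n a).comp (C 1 - X) = PhiMap n a := by
  rw [phi_eq, Polynomial.comp_assoc]
  congr 1
  have hc : (2:ℂ[X]) * C (1/2:ℂ) = 1 := by
    rw [← C_1, ← map_ofNat C 2, ← map_mul]; norm_num
  simp only [pow_comp, sub_comp, X_comp, C_comp, map_one]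
  linear_combination (2*X - 1) * hc

private lemma comp_sq_inj {P Q : Polynomial ℂ}
    (h : P.comp ((X - C (1/2:ℂ))^2) = Q.comp ((X - C (1/2:ℂ))^2)) : P = Q := by
  have h0 : (P - Q).comp ((X - C (1/2:ℂ))^2) = 0 := by rw [sub_comp, h, sub_self]
  rcases comp_eq_zero_iff.mp h0 with h1 | h1
  · exact sub_eq_zero.mp h1
  · exfalso
    have := congrArg natDegree h1.2
    rw [natDegree_pow, natDegree_X_sub_C, natDegree_C] at this
    simp at this

private lemma prod_roots (n : ℕ) (a : Fin n → ℂ) :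
    (∏ i : Fin n, (X - C ((a i)^2))).roots
      = (Finset.univ.val.map fun i => (a i)^2) := by
  have hmm : Multiset.map (fun i => X - C ((a i)^2)) Finset.univ.val
      = Multiset.map (fun z => X - C z) (Multiset.map (fun i => (a i)^2) Finset.univ.val) := by
    rw [Multiset.map_map]; rfl
  rw [Finset.prod_eq_multiset_prod, hmm]
  exact roots_multiset_prod_X_sub_C _

/-- Surjectivity, by induction on `n`. -/
private lemma phi_surj : ∀ (n : ℕ) (p : Polynomial ℂ), p.Monic → p.natDegree = 2 * n →
    p.comp (C 1 - X) = p → ∃ a : Fin n → ℂ, PhiMap n a = p := by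
  intro n
  induction n with
  | zero =>
    intro p hm hd _
    refine ⟨fun i => i.elim0, ?_⟩
    rw [hm.natDegree_eq_zero.mp (by simpa using hd)]
    simp [PhiMap]
  | succ n ih =>
    intro p hm hd hf
    have hp0 : p ≠ 0 := hm.ne_zero
    obtain ⟨z₀, hz₀⟩ := Complex.isAlgClosed.exists_root p (by
      rw [degree_eq_natDegree hp0, hd]; exact_mod_cast (by omega : 2 * (n + 1) ≠ 0))
    have hroot1 : p.IsRoot (1 - z₀) := by
      have := congrArg (eval z₀) hf
      simpa [eval_comp, hz₀.eq_zero] using this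
    set q : Polynomial ℂ := (X - C z₀) * (X - C (1 - z₀)) with hq
    have hqm : q.Monic := (monic_X_sub_C _).mul (monic_X_sub_C _)
    have hdvd : q ∣ p := by
      by_cases hcase : z₀ = 1 - z₀
      · -- double root at z₀ = 1/2
        have hder : (derivative p).IsRoot z₀ := by
          have h1 : derivative p = derivative (C 1 - X) * (derivative p).comp (C 1 - X) := by
            conv_lhs => rw [← hf]
            rw [derivative_comp]
          have h2 := congrArg (eval z₀) h1
          simp only [derivative_sub, derivative_C, derivative_X, zero_sub, eval_mul, eval_neg,
            eval_one, eval_comp, eval_sub, eval_C, eval_X] at h2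
          rw [← hcase] at h2
          have : (2 : ℂ) * eval z₀ (derivative p) = 0 := by linear_combination h2
          rcases mul_eq_zero.mp this with h | h
          · norm_num at h
          · exact h
        have hmult : 1 < p.rootMultiplicity z₀ :=
          (one_lt_rootMultiplicity_iff_isRoot hp0).mpr ⟨hz₀, hder⟩
        have : (X - C z₀) ^ 2 ∣ p :=
          dvd_trans (pow_dvd_pow _ hmult) (pow_rootMultiplicity_dvd p z₀)
        rwa [hq, ← hcase, ← sq]
      · -- two distinct roots z₀ and 1 - z₀
        obtain ⟨r, hr⟩ := (dvd_iff_isRoot).mpr hz₀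
        have hroot2 : r.IsRoot (1 - z₀) := by
          have := hroot1
          rw [hr] at this
          simp only [IsRoot, eval_mul, eval_sub, eval_X, eval_C] at this
          rcases mul_eq_zero.mp this with h | h
          · exact absurd (by linear_combination -h) hcase
          · exact h
        obtain ⟨s, hs⟩ := (dvd_iff_isRoot).mpr hroot2
        exact ⟨s, by rw [hr, hs, hq, mul_assoc]⟩
    obtain ⟨s, hs⟩ := hdvd
    have hs_monic : s.Monic := hqm.of_mul_monic_left (hs ▸ hm)
    have hq_deg : q.natDegree = 2 := by
      rw [hq, natDegree_mul (monic_X_sub_C _).ne_zero (monic_X_sub_C _).ne_zero,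
        natDegree_X_sub_C, natDegree_X_sub_C]
    have hs_deg : s.natDegree = 2 * n := by
      have := hd
      rw [hs, natDegree_mul hqm.ne_zero hs_monic.ne_zero, hq_deg] at this
      omega
    have hq_comp : q.comp (C 1 - X) = q := by
      simp only [hq, mul_comp, sub_comp, X_comp, C_comp, map_one, map_sub, one_comp]
      ring
    have hs_comp : s.comp (C 1 - X) = s := by
      have h1 : q * s.comp (C 1 - X) = q * s := by
        calc q * s.comp (C 1 - X) = (q * s).comp (C 1 - X) := by rw [mul_comp, hq_comp]
        _ = p.comp (C 1 - X) := by rw [← hs]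
        _ = p := hf
        _ = q * s := hs
      exact mul_left_cancel₀ hqm.ne_zero h1
    obtain ⟨a', ha'⟩ := ih s hs_monic hs_deg hs_comp
    refine ⟨Fin.cons (z₀ - 1/2) a', ?_⟩
    rw [PhiMap, Fin.prod_univ_succ]
    simp only [Fin.cons_zero, Fin.cons_succ]
    have hfac : (X - C (1/2:ℂ) + C (z₀ - 1/2)) * (X - C (1/2:ℂ) - C (z₀ - 1/2)) = q := by
      have hc : (2:ℂ[X]) * C (1/2:ℂ) = 1 := by
        rw [← C_1, ← map_ofNat C 2, ← map_mul]; norm_num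
      simp only [hq, map_sub, map_one]
      linear_combination (C z₀ - X) * hc
    rw [hfac, hs, ← ha', PhiMap]

/-- `Φ_n` is a surjection from `ℂⁿ` onto the set of monic polynomials of degree
`2n` satisfying `p(z) = p(1 − z)`, and `Φ_n(a) = Φ_n(b)` if and only if `a` and `b` lie in the
same `W(B_n)`-orbit. -/
theorem statement6 (n : ℕ) (hn : 1 ≤ n) :
    (∀ a : Fin n → ℂ, (PhiMap n a).Monic ∧ (PhiMap n a).natDegree = 2 * n ∧
        (PhiMap n a).comp (C 1 - X) = PhiMap n a) ∧
    (∀ p : Polynomial ℂ, p.Monic → p.natDegree = 2 * n → p.comp (C 1 - X) = p →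
        ∃ a : Fin n → ℂ, PhiMap n a = p) ∧
    (∀ a b : Fin n → ℂ, PhiMap n a = PhiMap n b ↔ SameBnOrbit n a b) := by
  refine ⟨fun a => ⟨phi_monic n a, phi_natDegree n a, phi_funcEq n a⟩, phi_surj n, fun a b => ?_⟩
  constructor
  · intro h
    -- extract multiset equality
    have hP : (∏ i : Fin n, (X - C ((a i)^2))) = ∏ i : Fin n, (X - C ((b i)^2)) := by
      apply comp_sq_inj
      rw [← phi_eq, ← phi_eq, h]
    have hroots : (Finset.univ.val.map fun i => (b i)^2)
        = (Finset.univ.val.map fun i => (a i)^2) := by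
      rw [← prod_roots, ← prod_roots, hP]
    rw [Fin.univ_val_map, Fin.univ_val_map, Multiset.coe_eq_coe] at hroots
    letI : LinearOrder ℂ := IsWellOrder.linearOrder WellOrderingRel
    obtain ⟨σ, hσ⟩ := exists_perm_of_ofFn_perm hroots
    refine ⟨σ, fun i => if b i = a (σ i) then 1 else -1, fun i => ?_, fun i => ?_⟩
    · by_cases hbi : b i = a (σ i) <;> simp [hbi]
    · by_cases hbi : b i = a (σ i)
      · simp [hbi]
      · simp only [hbi, if_neg, ite_false]
        have hsq : (b i)^2 = (a (σ i))^2 := hσ i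
        have : (b i - a (σ i)) * (b i + a (σ i)) = 0 := by linear_combination hsq
        rcases mul_eq_zero.mp this with h' | h'
        · exact absurd (by linear_combination h') hbi
        · linear_combination h'
  · rintro ⟨σ, ε, hε, hb⟩
    rw [phi_eq, phi_eq]
    congr 1
    calc (∏ i : Fin n, (X - C ((a i)^2)))
        = ∏ i : Fin n, (X - C ((a (σ i))^2)) := (Equiv.prod_comp σ _).symm
      _ = ∏ i : Fin n, (X - C ((b i)^2)) := by
          refine Finset.prod_congr rfl fun i _ => ?_
          have : (b i)^2 = (a (σ i))^2 := by
            rw [hb i]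
            rcases hε i with h | h <;> rw [h] <;> ring
          rw [this]
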